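/- The renormalization operation on a coherent weight function of a rooted tree preserves coherence: if h is coherent and there exists a sibling-subtree with positive weight outside the refuted vertex, then the renormalized weight function (which zeroes the refuted subtree and rescales the surviving subtrees under the deepest ancestor with surviving support) is again coherent. -/
import Mathlib


/-- An abstract rooted tree: every vertex has a parent (the root is its own
parent), a depth (distance to the root), every vertex is connected to the
root, and each depth level is finite (finitely-branching). -/
structure RTree (V : Type) where
  root : V
  parent : V → V
  depth : V → ℕ
  parent_root : parent root = root
  depth_root : depth root = 0
  depth_parent : ∀ v : V, v ≠ root → depth (parent v) + 1 = depth v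
  ancestor_root : ∀ v : V, parent^[depth v] v = root
  level_finite : ∀ d : ℕ, {v : V | depth v = d}.Finite

namespace RTree

variable {V : Type}

/-- The children of a vertex. -/
def children (T : RTree V) (v : V) : Set V :=
  {u : V | T.parent u = v ∧ u ≠ T.root}

/-- The descendants of `v` that lie `e` levels below `v`. -/
def descAt (T : RTree V) (e : ℕ) (v : V) : Set V :=
  {u : V | T.parent^[e] u = v ∧ T.depth u = T.depth v + e}

end RTree

/-- A coherent weight function (a Hintikka tree): the root gets weight 1 and
the weight of each vertex is the sum of the weights of its children. -/
def Coherent {V : Type} (T : RTree V) (h : V → ℝ) : Prop :=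
  h T.root = 1 ∧ ∀ v : V, h v = ∑ᶠ u ∈ T.children v, h u
open scoped Classical

/-- `u` is an ancestor of (or equal to) `v`. -/
def AncOrEq {V : Type} (T : RTree V) (u v : V) : Prop :=
  ∃ k : ℕ, T.parent^[k] v = u ∧ T.depth v = T.depth u + k

/-- `u` is a proper descendant of `ρ`. -/
def ProperDesc {V : Type} (T : RTree V) (ρ u : V) : Prop :=
  ∃ j : ℕ, 0 < j ∧ T.parent^[j] u = ρ ∧ T.depth u = T.depth ρ + j

/-- `u` is supported (relative to weights `h`, target depth `D`, and the
refuted depth-`D` vertex `w`): there is a chain from `u` down to some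
depth-`D` vertex `v ≠ w` along which `h` is positive (for vertices deeper
than `D`, we require the ancestor at depth `D` to avoid `w` and to carry
positive weight). -/
def Supported {V : Type} (T : RTree V) (h : V → ℝ) (D : ℕ) (w : V) (u : V) : Prop :=
  if T.depth u ≤ D then
    ∃ v : V, T.depth v = D ∧ v ≠ w ∧ T.parent^[D - T.depth u] v = u ∧
      ∀ k : ℕ, k ≤ D - T.depth u → 0 < h (T.parent^[k] v)
  else
    T.parent^[T.depth u - D] u ≠ w ∧ 0 < h (T.parent^[T.depth u - D] u)

/-- The total renormalization constant: sum of `h` over the children of `ρ`. -/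
noncomputable def Ztot {V : Type} (T : RTree V) (h : V → ℝ) (ρ : V) : ℝ :=
  ∑ᶠ u ∈ T.children ρ, h u

/-- The positive renormalization constant: sum of `h` over the supported
children of `ρ`. -/
noncomputable def Zplus {V : Type} (T : RTree V) (h : V → ℝ) (D : ℕ) (w ρ : V) : ℝ :=
  ∑ᶠ u ∈ T.children ρ ∩ {u : V | Supported T h D w u}, h u

/-- Renormalization of `h` refuting the depth-`D` vertex `w`, with
redistribution point `ρ`: zero the unsupported descendants of `ρ`, rescale
the supported descendants of `ρ` by `Z/Z⁺`, and leave everything else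
unchanged. -/
noncomputable def renorm {V : Type} (T : RTree V) (h : V → ℝ) (D : ℕ) (w ρ : V) : V → ℝ :=
  fun u =>
    if ProperDesc T ρ u then
      if Supported T h D w u then (Ztot T h ρ / Zplus T h D w ρ) * h u else 0
    else h u

/-- `ρ` is the redistribution point for refuting the depth-`D` vertex `w`:
it is the deepest ancestor of `w` having a supported child. -/
def IsRedistPoint {V : Type} (T : RTree V) (h : V → ℝ) (D : ℕ) (w ρ : V) : Prop :=
  AncOrEq T ρ w ∧ (∃ c ∈ T.children ρ, Supported T h D w c) ∧
    ∀ u : V, AncOrEq T u w → T.depth ρ < T.depth u →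
      ∀ c ∈ T.children u, ¬ Supported T h D w c

section Aux
variable {V : Type} (T : RTree V)

lemma depth_iter : ∀ (k : ℕ) (u : V), T.depth (T.parent^[k] u) = T.depth u - k := by
  intro k
  induction k with
  | zero => intro u; simp
  | succ k ih =>
    intro u
    rw [Function.iterate_succ_apply]
    by_cases hu : u = T.root
    · subst hu
      rw [T.parent_root, ih, T.depth_root]; omega
    · have h1 := T.depth_parent u hu
      rw [ih]
      omega

lemma child_depth {c v : V} (hc : c ∈ T.children v) : T.depth c = T.depth v + 1 := by
  obtain ⟨h1, h2⟩ := hc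
  have := T.depth_parent c h2
  rw [h1] at this; omega

lemma children_finite (v : V) : (T.children v).Finite :=
  (T.level_finite (T.depth v + 1)).subset (fun c hc => child_depth T hc)

lemma coh_sum {h : V → ℝ} (hcoh : Coherent T h) (v : V) :
    h v = ∑ c ∈ (children_finite T v).toFinset, h c := by
  rw [hcoh.2 v, finsum_mem_eq_finite_toFinset_sum _ (children_finite T v)]

lemma child_le {h : V → ℝ} (hcoh : Coherent T h) (hnn : ∀ u, 0 ≤ h u)
    {c v : V} (hc : c ∈ T.children v) : h c ≤ h v := by
  rw [coh_sum T hcoh v]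
  exact Finset.single_le_sum (fun u _ => hnn u) ((children_finite T v).mem_toFinset.mpr hc)

lemma pos_chain {h : V → ℝ} (hcoh : Coherent T h) (hnn : ∀ u, 0 ≤ h u) :
    ∀ (e : ℕ) (v : V), 0 < h v → ∃ v₀ : V, T.parent^[e] v₀ = v ∧
      T.depth v₀ = T.depth v + e ∧ ∀ k ≤ e, 0 < h (T.parent^[k] v₀) := by
  intro e
  induction e with
  | zero =>
    intro v hv
    exact ⟨v, rfl, rfl, fun k hk => by simp [Nat.le_zero.mp hk, hv]⟩
  | succ e ih =>
    intro v hv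
    have hsum := coh_sum T hcoh v
    have hex : ∃ c ∈ (children_finite T v).toFinset, 0 < h c := by
      by_contra hcon
      push_neg at hcon
      have : h v = 0 := by
        rw [hsum]
        exact Finset.sum_eq_zero fun c hc => le_antisymm (hcon c hc) (hnn c)
      linarith
    obtain ⟨c, hcmem, hcpos⟩ := hex
    have hcmem' : c ∈ T.children v := (children_finite T v).mem_toFinset.mp hcmem
    obtain ⟨v₀, hpar, hdep, hpos⟩ := ih c hcpos
    refine ⟨v₀, ?_, ?_, ?_⟩
    · rw [Function.iterate_succ_apply', hpar, hcmem'.1]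
    · rw [hdep, child_depth T hcmem']; ring
    · intro k hk
      rcases Nat.lt_or_ge k (e + 1) with hk' | hk'
      · exact hpos k (by omega)
      · have hke : k = e + 1 := by omega
        subst hke
        rw [Function.iterate_succ_apply', hpar, hcmem'.1]
        exact hv

/-- If a child is supported, so is its parent. -/
lemma supported_parent {h : V → ℝ} {D : ℕ} {w : V} (hcoh : Coherent T h)
    (hnn : ∀ u, 0 ≤ h u) {c v : V} (hc : c ∈ T.children v)
    (hs : Supported T h D w c) : Supported T h D w v := by
  have hdc : T.depth c = T.depth v + 1 := child_depth T hc
  by_cases hcD : T.depth c ≤ D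
  · -- depth c ≤ D, so depth v < D
    rw [Supported, if_pos hcD] at hs
    obtain ⟨v₀, hv₀D, hv₀w, hv₀par, hv₀pos⟩ := hs
    have hcpos : 0 < h c := by
      have := hv₀pos (D - T.depth c) le_rfl
      rwa [hv₀par] at this
    have hvpos : 0 < h v := lt_of_lt_of_le hcpos (child_le T hcoh hnn hc)
    rw [Supported, if_pos (by omega)]
    refine ⟨v₀, hv₀D, hv₀w, ?_, ?_⟩
    · have : D - T.depth v = (D - T.depth c) + 1 := by omega
      rw [this, Function.iterate_succ_apply', hv₀par, hc.1]
    · intro k hk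
      rcases Nat.lt_or_ge k (D - T.depth v) with hk' | hk'
      · exact hv₀pos k (by omega)
      · have hkk : k = (D - T.depth c) + 1 := by omega
        subst hkk
        rw [Function.iterate_succ_apply', hv₀par, hc.1]
        exact hvpos
  · -- depth c > D
    rw [Supported, if_neg hcD] at hs
    rcases Nat.lt_or_ge D (T.depth v) with hvD | hvD
    · -- depth v > D
      rw [Supported, if_neg (by omega)]
      have heq : T.parent^[T.depth c - D] c = T.parent^[T.depth v - D] v := by
        have : T.depth c - D = (T.depth v - D) + 1 := by omega
        rw [this, Function.iterate_succ_apply, hc.1]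
      rwa [heq] at hs
    · -- depth v = D
      have hvD' : T.depth v = D := by omega
      have heq : T.parent^[T.depth c - D] c = v := by
        have : T.depth c - D = 1 := by omega
        rw [this]
        exact hc.1
      rw [heq] at hs
      rw [Supported, if_pos (by omega)]
      refine ⟨v, hvD', hs.1, ?_, ?_⟩
      · simp [hvD']
      · intro k hk
        have : k = 0 := by omega
        simp [this, hs.2]

/-- A child of a supported proper descendant of the redistribution point is
supported or has zero weight. -/
lemma supported_child {h : V → ℝ} {D : ℕ} {w ρ : V} (hcoh : Coherent T h)
    (hnn : ∀ u, 0 ≤ h u) (hwD : T.depth w = D)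
    (hmax : ∀ u : V, AncOrEq T u w → T.depth ρ < T.depth u →
      ∀ c ∈ T.children u, ¬ Supported T h D w c)
    {v : V} (hv : ProperDesc T ρ v) (hvs : Supported T h D w v)
    {c : V} (hc : c ∈ T.children v) : Supported T h D w c ∨ h c = 0 := by
  have hdc : T.depth c = T.depth v + 1 := child_depth T hc
  obtain ⟨j, hj0, hjpar, hjdep⟩ := hv
  rcases Nat.lt_or_ge D (T.depth v) with hvD | hvD
  · -- depth v > D : c automatically supported
    left
    rw [Supported, if_neg (by omega)] at hvs
    rw [Supported, if_neg (by omega)]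
    have heq : T.parent^[T.depth c - D] c = T.parent^[T.depth v - D] v := by
      have : T.depth c - D = (T.depth v - D) + 1 := by omega
      rw [this, Function.iterate_succ_apply, hc.1]
    rwa [heq]
  rcases Nat.eq_or_lt_of_le hvD with hvD' | hvD'
  · -- depth v = D
    left
    rw [Supported, if_pos (by omega)] at hvs
    obtain ⟨v₀, hv₀D, hv₀w, hv₀par, hv₀pos⟩ := hvs
    have hv₀ : v₀ = v := by
      have h0 : D - T.depth v = 0 := by omega
      rw [h0] at hv₀par
      exact hv₀par
    have heq : T.parent^[T.depth c - D] c = v₀ := by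
      have h1 : T.depth c - D = 1 := by omega
      rw [h1, Function.iterate_one, hc.1, hv₀]
    rw [Supported, if_neg (by omega), heq]
    exact ⟨hv₀w, by have := hv₀pos 0 (by omega); simpa using this⟩
  · -- depth v < D
    by_cases hczero : h c = 0
    · exact Or.inr hczero
    left
    by_contra hcns
    have hcpos : 0 < h c := lt_of_le_of_ne (hnn c) (Ne.symm hczero)
    -- positive chain from c down to depth D
    obtain ⟨v₀, hpar, hdep, hpos⟩ := pos_chain T hcoh hnn (D - T.depth c) c hcpos
    have hv₀D : T.depth v₀ = D := by omega
    -- its endpoint must be w, else c would be supported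
    have hv₀w : v₀ = w := by
      by_contra hne
      exact hcns (by
        rw [Supported, if_pos (by omega)]
        exact ⟨v₀, hv₀D, hne, hpar, hpos⟩)
    -- hence v is an ancestor of w strictly below ρ
    have hancv : AncOrEq T v w := by
      refine ⟨(D - T.depth c) + 1, ?_, by omega⟩
      rw [← hv₀w, Function.iterate_succ_apply', hpar, hc.1]
    have hnosup := hmax v hancv (by omega)
    -- but supportedness of v produces a supported child of v
    rw [Supported, if_pos (by omega)] at hvs
    obtain ⟨v₁, hv₁D, hv₁w, hv₁par, hv₁pos⟩ := hvs
    set m := D - T.depth v with hm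
    have hm1 : 1 ≤ m := by omega
    set c' := T.parent^[m - 1] v₁ with hc'
    have hparc' : T.parent c' = v := by
      have h2 : T.parent^[(m-1)+1] v₁ = v := by
        rw [show (m-1)+1 = m from by omega]; exact hv₁par
      rw [Function.iterate_succ_apply'] at h2
      rw [hc']; exact h2
    have hdc' : T.depth c' = T.depth v + 1 := by
      rw [hc', depth_iter T, hv₁D]; omega
    have hc'root : c' ≠ T.root := by
      intro hcr
      have := T.depth_root
      rw [hcr] at hdc'
      omega
    refine hnosup c' ⟨hparc', hc'root⟩ ?_
    rw [Supported, if_pos (by omega)]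
    refine ⟨v₁, hv₁D, hv₁w, ?_, ?_⟩
    · rw [show D - T.depth c' = m - 1 from by omega]
    · intro k hk
      exact hv₁pos k (by omega)

/-- A child of an unsupported vertex is unsupported. -/
lemma unsupported_child {h : V → ℝ} {D : ℕ} {w : V} (hcoh : Coherent T h)
    (hnn : ∀ u, 0 ≤ h u) {v : V} (hvs : ¬ Supported T h D w v)
    {c : V} (hc : c ∈ T.children v) : ¬ Supported T h D w c :=
  fun hs => hvs (supported_parent T hcoh hnn hc hs)

lemma properDesc_child {ρ v c : V} (hv : ProperDesc T ρ v)
    (hc : c ∈ T.children v) : ProperDesc T ρ c := by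
  obtain ⟨j, hj0, hjpar, hjdep⟩ := hv
  refine ⟨j + 1, by omega, ?_, ?_⟩
  · rw [Function.iterate_succ_apply, hc.1, hjpar]
  · rw [child_depth T hc]; omega

lemma child_of_nondesc {ρ v c : V} (hvρ : v ≠ ρ) (hv : ¬ ProperDesc T ρ v)
    (hc : c ∈ T.children v) : ¬ ProperDesc T ρ c := by
  rintro ⟨j, hj0, hjpar, hjdep⟩
  rcases j with _ | j
  · omega
  rcases j with _ | j
  · rw [Function.iterate_succ_apply, Function.iterate_zero_apply, hc.1] at hjpar
    exact hvρ hjpar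
  · refine hv ⟨j + 1, by omega, ?_, ?_⟩
    · rw [Function.iterate_succ_apply, hc.1] at hjpar
      exact hjpar
    · have := child_depth T hc
      omega

end Aux

/-- Renormalization preserves coherence: if `h` is coherent (and nonnegative),
`w` is the refuted depth-`D` vertex, `ρ` is the corresponding redistribution
point (the deepest ancestor of `w` with surviving, i.e. supported, children),
and the surviving weight `Z⁺` outside the refuted vertex is positive, then the
renormalized weight function is again coherent. -/
theorem stmt4 {V : Type} (T : RTree V) (h : V → ℝ) (D : ℕ) (w ρ : V)
    (hcoh : Coherent T h) (hnn : ∀ v : V, 0 ≤ h v)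
    (hwD : T.depth w = D)
    (hρ : IsRedistPoint T h D w ρ)
    (hZp : 0 < Zplus T h D w ρ) :
    Coherent T (renorm T h D w ρ) := by
  obtain ⟨hanc, hexc, hmax⟩ := hρ
  have hZt : Ztot T h ρ = h ρ := (hcoh.2 ρ).symm
  constructor
  · have hnd : ¬ ProperDesc T ρ T.root := by
      rintro ⟨j, hj, -, hd⟩
      rw [T.depth_root] at hd
      omega
    simp only [renorm, if_neg hnd]
    exact hcoh.1
  · intro v
    by_cases hvρ : v = ρ
    · subst hvρ
      have hself : ¬ ProperDesc T v v := by
        rintro ⟨j, hj, -, hd⟩; omega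
      have hchild : ∀ c ∈ T.children v, ProperDesc T v c := by
        intro c hc
        exact ⟨1, one_pos, by simpa using hc.1, by rw [child_depth T hc]⟩
      have hren : ∀ c ∈ T.children v, renorm T h D w v c =
          if Supported T h D w c then (Ztot T h v / Zplus T h D w v) * h c else 0 := by
        intro c hc
        simp only [renorm, if_pos (hchild c hc)]
      rw [show renorm T h D w v v = h v from by simp only [renorm, if_neg hself]]
      rw [finsum_mem_eq_finite_toFinset_sum _ (children_finite T v),
        Finset.sum_congr rfl (fun c hc => hren c ((children_finite T v).mem_toFinset.mp hc))]
      have hZp' : Zplus T h D w v =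
          ∑ c ∈ (children_finite T v).toFinset.filter (fun c => Supported T h D w c), h c := by
        rw [Zplus, finsum_mem_eq_finite_toFinset_sum _ ((children_finite T v).inter_of_left _)]
        apply Finset.sum_congr _ (fun _ _ => rfl)
        ext c
        simp [Set.Finite.mem_toFinset, Finset.mem_filter, Set.mem_inter_iff, and_comm]
      rw [← Finset.sum_filter, ← Finset.mul_sum, ← hZp', hZt,
        div_mul_cancel₀ _ (ne_of_gt hZp)]
    by_cases hpd : ProperDesc T ρ v
    · by_cases hvs : Supported T h D w v
      · have hren : ∀ c ∈ T.children v, renorm T h D w ρ c =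
            (Ztot T h ρ / Zplus T h D w ρ) * h c := by
          intro c hc
          have hpdc := properDesc_child T hpd hc
          rcases supported_child T hcoh hnn hwD hmax hpd hvs hc with hs | hz
          · simp only [renorm, if_pos hpdc, if_pos hs]
          · simp only [renorm, if_pos hpdc, hz, mul_zero, ite_self]
        rw [show renorm T h D w ρ v = (Ztot T h ρ / Zplus T h D w ρ) * h v from by
          simp only [renorm, if_pos hpd, if_pos hvs]]
        rw [finsum_mem_eq_finite_toFinset_sum _ (children_finite T v),
          Finset.sum_congr rfl (fun c hc => hren c ((children_finite T v).mem_toFinset.mp hc)),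
          ← Finset.mul_sum, ← coh_sum T hcoh v]
      · have hren : ∀ c ∈ T.children v, renorm T h D w ρ c = 0 := by
          intro c hc
          have hns := unsupported_child T hcoh hnn hvs hc
          simp only [renorm, if_pos (properDesc_child T hpd hc), if_neg hns]
        rw [show renorm T h D w ρ v = 0 from by simp only [renorm, if_pos hpd, if_neg hvs]]
        rw [finsum_mem_eq_finite_toFinset_sum _ (children_finite T v)]
        exact (Finset.sum_eq_zero fun c hc =>
          hren c ((children_finite T v).mem_toFinset.mp hc)).symm
    · have hren : ∀ c ∈ T.children v, renorm T h D w ρ c = h c := by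
        intro c hc
        simp only [renorm, if_neg (child_of_nondesc T hvρ hpd hc)]
      rw [show renorm T h D w ρ v = h v from by simp only [renorm, if_neg hpd]]
      rw [hcoh.2 v]
      exact finsum_mem_congr rfl fun c hc => (hren c hc).symm
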